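/- arXiv:1408.3694 — 3 statements merged into one kernel-verified Lean document; each statement's English description precedes it below -/
import Mathlib

section
/- Let (A,⊛) be a complemented category with generator X and let M be a finitely generated A-module over a ring k. Then for each p ≥ 0 the shifted module Σ_p M, defined by (Σ_p M)_V = ⊕_{h ∈ Hom_A(X^p,V)} M_{W_h} where W_h is the complement of h(X^p) in V, is a finitely generated A-module. -/
open CategoryTheory CategoryTheory.Limits CategoryTheory.MonoidalCategory

universe u v

variable {A : Type u} [Category.{v} A] [MonoidalCategory A]

/-- The canonical morphism `V ⟶ V ⊗ V'` coming from the fact that the monoidal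
unit is initial. -/
def canL (hI : IsInitial (𝟙_ A)) (V V' : A) : V ⟶ V ⊗ V' :=
  (ρ_ V).inv ≫ (V ◁ hI.to V')

/-- The canonical morphism `V' ⟶ V ⊗ V'` coming from the fact that the monoidal
unit is initial. -/
def canR (hI : IsInitial (𝟙_ A)) (V V' : A) : V' ⟶ V ⊗ V' :=
  (λ_ V').inv ≫ (hI.to V ▷ V')

/-- `d : D ⟶ V` is a complement of the subobject `c : C ⟶ V`. -/
def IsComplement (hI : IsInitial (𝟙_ A)) {C V D : A} (c : C ⟶ V) (d : D ⟶ V) : Prop :=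
  ∃ φ : C ⊗ D ≅ V, canL hI C D ≫ φ.hom = c ∧ canR hI C D ≫ φ.hom = d

/-- A complemented category: a symmetric monoidal category in which every
morphism is a monomorphism, the monoidal unit is initial, morphisms out of a
tensor product are determined by their precompositions with the two canonical
morphisms, and every subobject has a complement, unique up to isomorphism. -/
structure ComplementedCategory (A : Type u) [Category.{v} A] [MonoidalCategory A]
    [SymmetricCategory A] : Prop where
  mono : ∀ {V W : A} (f : V ⟶ W), Mono f
  unitInitial : Nonempty (IsInitial (𝟙_ A))
  hom_ext : ∀ (hI : IsInitial (𝟙_ A)) {V V' W : A} (f g : V ⊗ V' ⟶ W),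
    canL hI V V' ≫ f = canL hI V V' ≫ g → canR hI V V' ≫ f = canR hI V V' ≫ g → f = g
  compl_exists : ∀ (hI : IsInitial (𝟙_ A)) {C V : A} (c : C ⟶ V),
    ∃ (D : A) (d : D ⟶ V), IsComplement hI c d
  compl_unique : ∀ (hI : IsInitial (𝟙_ A)) {C V D D' : A} (c : C ⟶ V)
    (d : D ⟶ V) (d' : D' ⟶ V), IsComplement hI c d → IsComplement hI c d' →
    ∃ ψ : D ≅ D', ψ.hom ≫ d' = d

/-- Iterated tensor powers of an object. -/
def tpow (X : A) : ℕ → A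
  | 0 => 𝟙_ A
  | n + 1 => tpow X n ⊗ X

/-- `X` is a generator: every object is isomorphic to a unique tensor power of
`X` (whose exponent is called the `X`-rank of the object). -/
def IsGen (X : A) : Prop :=
  ∀ V : A, ∃! i : ℕ, Nonempty (V ≅ tpow X i)

universe w

variable (k : Type w) [Ring k]

/-- A family of submodules of the values of a functor `M : A ⥤ Mod_k` forms a
subfunctor when it is preserved by all the maps of `M`. -/
def IsSubfunctor (M : A ⥤ ModuleCat.{w} k)
    (N : ∀ c : A, Submodule k (M.obj c)) : Prop :=
  ∀ {c c' : A} (f : c ⟶ c') (x : M.obj c), x ∈ N c → M.map f x ∈ N c'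

/-- An `A`-module (functor `A ⥤ Mod_k`) is finitely generated if finitely many
elements generate it: the only subfunctor containing them is the whole module. -/
def IsFinitelyGenerated (M : A ⥤ ModuleCat.{w} k) : Prop :=
  ∃ (n : ℕ) (c : Fin n → A) (x : ∀ i, M.obj (c i)),
    ∀ N : ∀ d : A, Submodule k (M.obj d), IsSubfunctor k M N →
      (∀ i, x i ∈ N (c i)) → ∀ d : A, N d = ⊤

/-- A subfunctor is finitely generated if finitely many of its elements
generate it. -/
def SubfunctorFG (M : A ⥤ ModuleCat.{w} k)
    (N : ∀ c : A, Submodule k (M.obj c)) : Prop :=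
  ∃ (n : ℕ) (c : Fin n → A) (x : ∀ i, M.obj (c i)),
    (∀ i, x i ∈ N (c i)) ∧
    ∀ N' : ∀ d : A, Submodule k (M.obj d), IsSubfunctor k M N' →
      (∀ d : A, N' d ≤ N d) → (∀ i, x i ∈ N' (c i)) → ∀ d : A, N' d = N d

/-- The category of `A`-modules over `k` is Noetherian: every subfunctor of a
finitely generated `A`-module is finitely generated. -/
def ModulesNoetherian : Prop :=
  ∀ M : A ⥤ ModuleCat.{w} k, IsFinitelyGenerated k M →
    ∀ N : ∀ c : A, Submodule k (M.obj c), IsSubfunctor k M N →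
      SubfunctorFG k M N


section Aux

theorem eqToHom_comp_incl {Y V : A} (W : (Y ⟶ V) → A) (incl : ∀ h : Y ⟶ V, W h ⟶ V)
    {h1 h2 : Y ⟶ V} (eq : h1 = h2) :
    CategoryTheory.eqToHom (congrArg W eq) ≫ incl h2 = incl h1 := by
  subst eq; simp

theorem of_map_eqToHom (M : A ⥤ ModuleCat.{w} k) {Y V : A} [DecidableEq (Y ⟶ V)]
    (W : (Y ⟶ V) → A) {h1 h2 : Y ⟶ V} (eq : h1 = h2) (y : M.obj (W h1)) :
    DirectSum.of (fun h => M.obj (W h)) h2 (M.map (CategoryTheory.eqToHom (congrArg W eq)) y) =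
      DirectSum.of (fun h => M.obj (W h)) h1 y := by
  subst eq
  simp

end Aux

/-- The shift `Σ_p M` of a finitely generated `A`-module `M` over a
complemented category `A` with generator `X` is finitely generated.  The shift
is presented by its data: for each `h : Xᵖ ⟶ V` a complement `W V h` of `h`
with inclusion `incl V h`, for each `f : V ⟶ V'` the canonical morphism
`ι f h : W V h ⟶ W V' (h ≫ f)` (characterized by `ι f h ≫ incl = incl ≫ f`),
and an `A`-module `S` with `S_V ≃ ⨁_{h : Xᵖ ⟶ V} M_{W V h}` under which the
maps of `S` act by the maps induced by the canonical morphisms. -/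
theorem shift_finitely_generated [SymmetricCategory A]
    (hA : ComplementedCategory A) (X : A) (hX : IsGen X)
    (hI : IsInitial (𝟙_ A)) (p : ℕ)
    [∀ V : A, DecidableEq (tpow X p ⟶ V)]
    (M : A ⥤ ModuleCat.{w} k) (hM : IsFinitelyGenerated k M)
    (W : ∀ V : A, (tpow X p ⟶ V) → A)
    (incl : ∀ (V : A) (h : tpow X p ⟶ V), W V h ⟶ V)
    (hW : ∀ (V : A) (h : tpow X p ⟶ V), IsComplement hI h (incl V h))
    (ι : ∀ {V V' : A} (f : V ⟶ V') (h : tpow X p ⟶ V), W V h ⟶ W V' (h ≫ f))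
    (hι : ∀ {V V' : A} (f : V ⟶ V') (h : tpow X p ⟶ V),
      ι f h ≫ incl V' (h ≫ f) = incl V h ≫ f)
    (S : A ⥤ ModuleCat.{w} k)
    (e : ∀ V : A, S.obj V ≃ₗ[k] DirectSum (tpow X p ⟶ V) (fun h => M.obj (W V h)))
    (he : ∀ {V V' : A} (f : V ⟶ V') (h : tpow X p ⟶ V) (x : M.obj (W V h)),
      e V' (S.map f ((e V).symm
          (DirectSum.of (fun h' => M.obj (W V h')) h x))) =
        DirectSum.of (fun h' => M.obj (W V' h')) (h ≫ f) (M.map (ι f h) x)) :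
    IsFinitelyGenerated k S := by

  classical
  obtain ⟨n, c, x, hx⟩ := hM
  have hcanR : ∀ U : A, IsComplement hI (canL hI (tpow X p) U) (canR hI (tpow X p) U) :=
    fun U => ⟨Iso.refl _, by simp, by simp⟩
  choose ψ hψ using fun U : A =>
    hA.compl_unique hI (canL hI (tpow X p) U) (canR hI (tpow X p) U)
      (incl (tpow X p ⊗ U) (canL hI (tpow X p) U)) (hcanR U)
      (hW (tpow X p ⊗ U) (canL hI (tpow X p) U))
  let glin : ∀ U : A, M.obj U →ₗ[k] S.obj (tpow X p ⊗ U) := fun U =>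
    (e (tpow X p ⊗ U)).symm.toLinearMap ∘ₗ
      (DirectSum.lof k (tpow X p ⟶ tpow X p ⊗ U)
        (fun h => M.obj (W (tpow X p ⊗ U) h)) (canL hI (tpow X p) U)) ∘ₗ
      (M.map (ψ U).hom).hom
  have glin_apply : ∀ (U : A) (m : M.obj U),
      glin U m = (e (tpow X p ⊗ U)).symm
        (DirectSum.of (fun h => M.obj (W (tpow X p ⊗ U) h)) (canL hI (tpow X p) U)
          (M.map (ψ U).hom m)) := by
    intro U m
    simp only [glin, LinearMap.comp_apply, LinearEquiv.coe_coe, DirectSum.lof_eq_of]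
  refine ⟨n, fun i => tpow X p ⊗ c i, fun i => glin (c i) (x i), ?_⟩
  intro N hN hxN V
  have hcanL_nat : ∀ {U U' : A} (f : U ⟶ U'),
      canL hI (tpow X p) U ≫ (tpow X p ◁ f) = canL hI (tpow X p) U' := by
    intro U U' f
    simp only [canL, Category.assoc, ← MonoidalCategory.whiskerLeft_comp]
    congr 2
    exact hI.hom_ext _ _
  have hcanR_nat : ∀ {U U' : A} (f : U ⟶ U'),
      canR hI (tpow X p) U ≫ (tpow X p ◁ f) = f ≫ canR hI (tpow X p) U' := by
    intro U U' f
    simp only [canR, Category.assoc]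
    rw [← whisker_exchange, leftUnitor_inv_naturality_assoc]
  let N' : ∀ U : A, Submodule k (M.obj U) := fun U => (N (tpow X p ⊗ U)).comap (glin U)
  have key : ∀ {U U' : A} (f : U ⟶ U') (m : M.obj U),
      glin U' (M.map f m) = S.map (tpow X p ◁ f) (glin U m) := by
    intro U U' f m
    have eqc : canL hI (tpow X p) U ≫ (tpow X p ◁ f) = canL hI (tpow X p) U' := hcanL_nat f
    have keymor : (ψ U).hom ≫ ι (tpow X p ◁ f) (canL hI (tpow X p) U) ≫
        eqToHom (congrArg (W (tpow X p ⊗ U')) eqc) = f ≫ (ψ U').hom := by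
      haveI := hA.mono (incl (tpow X p ⊗ U') (canL hI (tpow X p) U'))
      rw [← cancel_mono (incl (tpow X p ⊗ U') (canL hI (tpow X p) U'))]
      rw [Category.assoc, Category.assoc,
        eqToHom_comp_incl (W (tpow X p ⊗ U')) (incl (tpow X p ⊗ U')) eqc, hι,
        ← Category.assoc, hψ U, hcanR_nat f, Category.assoc, hψ U']
    apply (e (tpow X p ⊗ U')).injective
    rw [glin_apply, glin_apply,
      he (tpow X p ◁ f) (canL hI (tpow X p) U) (M.map (ψ U).hom m),
      LinearEquiv.apply_symm_apply,
      ← of_map_eqToHom k M (W (tpow X p ⊗ U')) eqc]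
    congr 1
    calc M.map (ψ U').hom (M.map f m)
        = M.map (f ≫ (ψ U').hom) m := by rw [M.map_comp]; rfl
      _ = M.map ((ψ U).hom ≫ ι (tpow X p ◁ f) (canL hI (tpow X p) U) ≫
            eqToHom (congrArg (W (tpow X p ⊗ U')) eqc)) m := by rw [keymor]
      _ = M.map (eqToHom (congrArg (W (tpow X p ⊗ U')) eqc))
            (M.map (ι (tpow X p ◁ f) (canL hI (tpow X p) U)) (M.map (ψ U).hom m)) := by
          rw [M.map_comp, M.map_comp]; rfl
  have hsub : IsSubfunctor k M N' := by
    intro U U' f m hm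
    simp only [N', Submodule.mem_comap] at hm ⊢
    rw [key f m]
    exact hN (tpow X p ◁ f) _ hm
  have N'top : ∀ U : A, N' U = ⊤ := hx N' hsub (fun i => hxN i)
  rw [eq_top_iff]
  rintro s -
  have hmem : ∀ y : DirectSum (tpow X p ⟶ V) (fun h => M.obj (W V h)),
      (e V).symm y ∈ N V := by
    intro y
    induction y using DirectSum.induction_on with
    | zero => simpa using (N V).zero_mem
    | of h m =>
      obtain ⟨φ, h1, h2⟩ := hW V h
      have hz : glin (W V h) m ∈ N (tpow X p ⊗ W V h) := by
        have hm : m ∈ N' (W V h) := by rw [N'top (W V h)]; exact Submodule.mem_top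
        exact hm
      have hz2 : S.map φ.hom (glin (W V h) m) ∈ N V := hN φ.hom _ hz
      have keymor : (ψ (W V h)).hom ≫ ι φ.hom (canL hI (tpow X p) (W V h)) ≫
          eqToHom (congrArg (W V) h1) = 𝟙 (W V h) := by
        haveI := hA.mono (incl V h)
        rw [← cancel_mono (incl V h)]
        rw [Category.assoc, Category.assoc, eqToHom_comp_incl (W V) (incl V) h1, hι,
          ← Category.assoc, hψ (W V h), h2, Category.id_comp]
      have heq : S.map φ.hom (glin (W V h) m) =
          (e V).symm (DirectSum.of (fun h' => M.obj (W V h')) h m) := by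
        apply (e V).injective
        rw [glin_apply, he φ.hom (canL hI (tpow X p) (W V h)) (M.map (ψ (W V h)).hom m),
          LinearEquiv.apply_symm_apply, ← of_map_eqToHom k M (W V) h1]
        congr 1
        symm
        calc m = M.map (𝟙 (W V h)) m := by rw [M.map_id]; rfl
          _ = M.map ((ψ (W V h)).hom ≫ ι φ.hom (canL hI (tpow X p) (W V h)) ≫
                eqToHom (congrArg (W V) h1)) m := by rw [keymor]
          _ = M.map (eqToHom (congrArg (W V) h1))
                (M.map (ι φ.hom (canL hI (tpow X p) (W V h)))
                  (M.map (ψ (W V h)).hom m)) := by rw [M.map_comp, M.map_comp]; rfl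
      rw [← heq]
      exact hz2
    | add y z hy hz =>
      rw [map_add]
      exact (N V).add_mem hy hz
  simpa using hmem (e V s)
end

section
/- Let M be an A-module over a complemented category (A,⊛) with generator X. The torsion subfunctor T(M), defined by T(M)_V = {x ∈ M_V : there exists a morphism f: V → W with M_f(x) = 0}, is an A-submodule of M; in particular each T(M)_V is closed under addition. -/
open CategoryTheory CategoryTheory.Limits CategoryTheory.MonoidalCategory

universe u v

variable {A : Type u} [Category.{v} A] [MonoidalCategory A]

universe w

variable (k : Type w) [Ring k]

/-- Tensor powers add. -/
lemma tpow_add (X : A) (i : ℕ) : ∀ j : ℕ, Nonempty (tpow X i ⊗ tpow X j ≅ tpow X (i + j))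
  | 0 => ⟨ρ_ (tpow X i)⟩
  | j + 1 => by
    obtain ⟨e⟩ := tpow_add X i j
    exact ⟨(α_ (tpow X i) (tpow X j) X).symm ≪≫ whiskerRightIso e X⟩

/-- Cancellation of tensoring, via the rank given by the generator. -/
lemma tensor_cancel {X : A} (hX : IsGen X) {V D D' U : A}
    (e : V ⊗ D ≅ U) (e' : V ⊗ D' ≅ U) : Nonempty (D ≅ D') := by
  obtain ⟨m, ⟨em⟩, _⟩ := hX V
  obtain ⟨i, ⟨ei⟩, _⟩ := hX D
  obtain ⟨j, ⟨ej⟩, _⟩ := hX D'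
  obtain ⟨r, _, hr⟩ := hX U
  obtain ⟨ti⟩ := tpow_add X m i
  obtain ⟨tj⟩ := tpow_add X m j
  have h1 : m + i = r := hr _ ⟨e.symm ≪≫ whiskerRightIso em D ≪≫
    whiskerLeftIso (tpow X m) ei ≪≫ ti⟩
  have h2 : m + j = r := hr _ ⟨e'.symm ≪≫ whiskerRightIso em D' ≪≫
    whiskerLeftIso (tpow X m) ej ≪≫ tj⟩
  have hij : i = j := by omega
  subst hij
  exact ⟨ei ≪≫ ej.symm⟩

/-- The automorphism group of `U` acts transitively on `V ⟶ U`. -/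
lemma exists_auto [SymmetricCategory A] (hA : ComplementedCategory A) {X : A} (hX : IsGen X)
    (hI : IsInitial (𝟙_ A)) {V U : A} (a b : V ⟶ U) :
    ∃ σ : U ≅ U, a ≫ σ.hom = b := by
  obtain ⟨D, d, φ, hφ, -⟩ := hA.compl_exists hI a
  obtain ⟨D', d', ψ, hψ, -⟩ := hA.compl_exists hI b
  obtain ⟨θ⟩ := tensor_cancel hX φ ψ
  refine ⟨φ.symm ≪≫ whiskerLeftIso V θ ≪≫ ψ, ?_⟩
  have hcan : canL hI V D ≫ (V ◁ θ.hom) = canL hI V D' := by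
    simp only [canL, Category.assoc, MonoidalCategory.whiskerLeft_comp_assoc,
      ← MonoidalCategory.whiskerLeft_comp]
    congr 2
    exact hI.hom_ext _ _
  calc a ≫ (φ.symm ≪≫ whiskerLeftIso V θ ≪≫ ψ).hom
      = (a ≫ φ.inv) ≫ (V ◁ θ.hom) ≫ ψ.hom := by
        simp [Iso.trans_hom, Category.assoc]
    _ = canL hI V D ≫ (V ◁ θ.hom) ≫ ψ.hom := by
        rw [← hφ]; simp
    _ = canL hI V D' ≫ ψ.hom := by rw [← Category.assoc, hcan]
    _ = b := hψ

/-- The torsion subfunctor `T(M)_V = {x ∈ M_V | M_f(x) = 0 for some f : V ⟶ W}`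
of an `A`-module `M` over a complemented category is an `A`-submodule of `M`;
in particular each `T(M)_V` is closed under addition. -/
theorem torsion_is_subfunctor [SymmetricCategory A]
    (hA : ComplementedCategory A) (X : A) (hX : IsGen X)
    (M : A ⥤ ModuleCat.{w} k) :
    ∃ N : ∀ V : A, Submodule k (M.obj V),
      (∀ V : A, (N V : Set (M.obj V)) =
        {x : M.obj V | ∃ (W : A) (f : V ⟶ W), M.map f x = 0}) ∧
      IsSubfunctor k M N := by
  obtain ⟨hI⟩ := hA.unitInitial
  refine ⟨fun V => {
    carrier := {x : M.obj V | ∃ (W : A) (f : V ⟶ W), M.map f x = 0}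
    zero_mem' := ⟨V, 𝟙 V, by simp⟩
    add_mem' := ?_
    smul_mem' := ?_ }, fun V => rfl, ?_⟩
  · rintro x y ⟨W, f, hf⟩ ⟨W', g, hg⟩
    -- a common killing morphism
    obtain ⟨σ, hσ⟩ := exists_auto hA hX hI (f ≫ canL hI W W') (g ≫ canR hI W W')
    refine ⟨W ⊗ W', g ≫ canR hI W W', ?_⟩
    have hx : M.map (g ≫ canR hI W W') x = 0 := by
      rw [← hσ, M.map_comp, M.map_comp]
      simp only [CategoryTheory.comp_apply, Function.comp_apply, hf, map_zero]
    have hy : M.map (g ≫ canR hI W W') y = 0 := by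
      rw [M.map_comp]
      simp only [CategoryTheory.comp_apply, Function.comp_apply, hg, map_zero]
    rw [map_add, hx, hy, add_zero]
  · rintro r x ⟨W, f, hf⟩
    exact ⟨W, f, by simp [map_smul, hf]⟩
  · rintro V V' g x ⟨W, f, hf⟩
    obtain ⟨σ, hσ⟩ := exists_auto hA hX hI (g ≫ canL hI V' W) (f ≫ canR hI V' W)
    refine ⟨V' ⊗ W, canL hI V' W ≫ σ.hom, ?_⟩
    have step : M.map (canL hI V' W ≫ σ.hom) ((M.map g) x)
        = M.map (g ≫ (canL hI V' W ≫ σ.hom)) x := by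
      simp only [M.map_comp, CategoryTheory.comp_apply, Function.comp_apply]
    rw [step, ← Category.assoc, hσ, M.map_comp]
    simp only [CategoryTheory.comp_apply, Function.comp_apply, hf, map_zero]
end

section
/- Let (A,⊛) be a complemented category with generator X such that the category of A-modules over a ring k is Noetherian, and let M be a finitely generated A-module. Then there exists N ≥ 0 such that T(M)_V = 0 for every object V of X-rank at least N, where T(M) is the torsion submodule of M. -/
open CategoryTheory CategoryTheory.Limits CategoryTheory.MonoidalCategory

universe u v

variable {A : Type u} [Category.{v} A] [MonoidalCategory A]

universe w

variable (k : Type w) [Ring k]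

section TorsionAux

/-- Tensor powers add up to tensor powers. -/
def tpowAdd (X : A) : ∀ a b : ℕ, tpow X a ⊗ tpow X b ≅ tpow X (a + b)
  | _, 0 => ρ_ _
  | a, b+1 => (α_ _ _ _).symm ≪≫ whiskerRightIso (tpowAdd X a b) X

/-- A canonical morphism between tensor powers with nondecreasing exponents. -/
def powLe (hI : IsInitial (𝟙_ A)) (X : A) {m j : ℕ} (h : m ≤ j) : tpow X m ⟶ tpow X j :=
  canL hI _ (tpow X (j - m)) ≫ (tpowAdd X m (j - m)).hom ≫ eqToHom (by rw [Nat.add_sub_cancel' h])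

theorem rank_eq {X : A} (hX : IsGen X) {V : A} {i j : ℕ}
    (h1 : Nonempty (V ≅ tpow X i)) (h2 : Nonempty (V ≅ tpow X j)) : i = j := by
  obtain ⟨m, -, hu⟩ := hX V
  rw [hu i h1, hu j h2]

/-- Any two morphisms out of an object fit into a commutative square. -/
theorem square (compl : ∀ (hI : IsInitial (𝟙_ A)) {C V : A} (c : C ⟶ V),
      ∃ (D : A) (φ : C ⊗ D ≅ V), canL hI C D ≫ φ.hom = c)
    (hI : IsInitial (𝟙_ A)) {V V' W : A} (g : V ⟶ V') (f : V ⟶ W) :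
    ∃ (Z : A) (h : V' ⟶ Z) (h' : W ⟶ Z), g ≫ h = f ≫ h' := by
  obtain ⟨D, φ, hL⟩ := compl hI g
  refine ⟨W ⊗ D, φ.inv ≫ (f ▷ D), canL hI W D, ?_⟩
  have h1 : g ≫ φ.inv = canL hI V D := by rw [← hL]; simp
  rw [← Category.assoc, h1]
  unfold canL
  rw [Category.assoc, whisker_exchange]
  simp

/-- A morphism killing a torsion element factors any morphism to a target of at
least the same rank. -/
theorem factor (compl : ∀ (hI : IsInitial (𝟙_ A)) {C V : A} (c : C ⟶ V),
      ∃ (D : A) (φ : C ⊗ D ≅ V), canL hI C D ≫ φ.hom = c)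
    (hI : IsInitial (𝟙_ A)) {X : A} (hX : IsGen X) {c W V : A} (f : c ⟶ W) (g : c ⟶ V)
    {m j : ℕ} (iW : W ≅ tpow X m) (iV : V ≅ tpow X j) (hmj : m ≤ j) :
    ∃ h : W ⟶ V, f ≫ h = g := by
  obtain ⟨Df, φf, hfL⟩ := compl hI f
  obtain ⟨Dg, φg, hgL⟩ := compl hI g
  obtain ⟨e, ⟨ιc⟩, -⟩ := hX c
  obtain ⟨a, ⟨ιf⟩, -⟩ := hX Df
  obtain ⟨b, ⟨ιg⟩, -⟩ := hX Dg
  have hm : m = e + a :=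
    rank_eq hX ⟨iW⟩ ⟨φf.symm ≪≫ tensorIso ιc ιf ≪≫ tpowAdd X e a⟩
  have hj : j = e + b :=
    rank_eq hX ⟨iV⟩ ⟨φg.symm ≪≫ tensorIso ιc ιg ≪≫ tpowAdd X e b⟩
  have hab : a ≤ b := by omega
  refine ⟨φf.inv ≫ (c ◁ (ιf.hom ≫ powLe hI X hab ≫ ιg.inv)) ≫ φg.hom, ?_⟩
  have h1 : f ≫ φf.inv = canL hI c Df := by rw [← hfL]; simp
  rw [← Category.assoc, h1, ← hgL]
  have h2 : canL hI c Df ≫ (c ◁ (ιf.hom ≫ powLe hI X hab ≫ ιg.inv)) = canL hI c Dg := by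
    unfold canL
    rw [Category.assoc, ← MonoidalCategory.whiskerLeft_comp]
    congr 2
    exact hI.hom_ext _ _
  rw [← Category.assoc, h2]

end TorsionAux

/-- If the category of `A`-modules over `k` is Noetherian and `M` is a finitely
generated `A`-module over the complemented category `A` with generator `X`,
then there is an `N` such that the torsion submodule of `M` vanishes on every
object of `X`-rank at least `N`. -/
theorem torsion_vanishes_in_large_rank [SymmetricCategory A]
    (hA : ComplementedCategory A) (X : A) (hX : IsGen X)
    (hNoeth : ModulesNoetherian (A := A) k)
    (M : A ⥤ ModuleCat.{w} k) (hM : IsFinitelyGenerated k M) :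
    ∃ N : ℕ, ∀ (V : A) (i : ℕ), N ≤ i → Nonempty (V ≅ tpow X i) →
      ∀ x : M.obj V, (∃ (W : A) (f : V ⟶ W), M.map f x = 0) → x = 0 := by
  obtain ⟨hI⟩ := hA.unitInitial
  have compl : ∀ (hI : IsInitial (𝟙_ A)) {C V : A} (c : C ⟶ V),
      ∃ (D : A) (φ : C ⊗ D ≅ V), canL hI C D ≫ φ.hom = c := by
    intro hI C V c
    obtain ⟨D, d, φ, h1, h2⟩ := hA.compl_exists hI c
    exact ⟨D, φ, h1⟩
  -- the torsion subfunctor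
  let T : ∀ c : A, Submodule k (M.obj c) := fun c =>
    { carrier := {x | ∃ (W : A) (f : c ⟶ W), M.map f x = 0}
      zero_mem' := ⟨c, 𝟙 c, by simp⟩
      add_mem' := by
        rintro x y ⟨Wx, fx, hx⟩ ⟨Wy, fy, hy⟩
        obtain ⟨Z, h, h', hcomm⟩ := square compl hI fx fy
        refine ⟨Z, fx ≫ h, ?_⟩
        have e1 : M.map (fx ≫ h) x = 0 := by simp [hx]
        have e2 : M.map (fx ≫ h) y = 0 := by rw [hcomm]; simp [hy]
        rw [map_add, e1, e2, add_zero]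
      smul_mem' := by
        rintro r x ⟨W, f, hx⟩
        exact ⟨W, f, by rw [map_smul, hx, smul_zero]⟩ }
  have hTsub : IsSubfunctor k M T := by
    rintro c c' f x ⟨W, q, hq⟩
    obtain ⟨Z, h, h', hcomm⟩ := square compl hI f q
    refine ⟨Z, h, ?_⟩
    have e1 : M.map (f ≫ h) x = M.map h (M.map f x) := by simp
    have e2 : M.map (q ≫ h') x = 0 := by simp [hq]
    rw [← e1, hcomm, e2]
  obtain ⟨n, c, x, hxT, hgen⟩ := hNoeth M hM T hTsub
  have hxT' : ∀ i, ∃ (Wi : A) (fi : c i ⟶ Wi), M.map fi (x i) = 0 := fun i => hxT i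
  choose W f hf using hxT'
  have hrk : ∀ i, ∃ mi : ℕ, Nonempty (W i ≅ tpow X mi) := fun i => (hX (W i)).exists
  choose m hm using hrk
  refine ⟨Finset.univ.sup m, ?_⟩
  rintro V i hNi ⟨iV⟩ x0 hx0
  have hx0T : x0 ∈ T V := hx0
  -- the subfunctor generated by the torsion generators
  let N' : ∀ d : A, Submodule k (M.obj d) := fun d =>
    Submodule.span k {y | ∃ (i0 : Fin n) (g : c i0 ⟶ d), y = M.map g (x i0)}
  have hN'sub : IsSubfunctor k M N' := by
    intro d d' g y hy
    refine Submodule.span_induction ?_ ?_ ?_ ?_ hy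
    · rintro z ⟨i0, q, rfl⟩
      exact Submodule.subset_span ⟨i0, q ≫ g, by simp⟩
    · simp only [map_zero]; exact Submodule.zero_mem _
    · intro a b _ _ ha hb
      rw [map_add]; exact Submodule.add_mem _ ha hb
    · intro r a _ ha
      rw [map_smul]; exact Submodule.smul_mem _ r ha
  have hN'le : ∀ d, N' d ≤ T d := by
    intro d
    refine Submodule.span_le.2 ?_
    rintro y ⟨i0, g, rfl⟩
    exact hTsub g (x i0) (hxT i0)
  have hxN' : ∀ i0, x i0 ∈ N' (c i0) := fun i0 =>
    Submodule.subset_span ⟨i0, 𝟙 (c i0), by simp⟩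
  have hEq := hgen N' hN'sub hN'le hxN' V
  have hbot : N' V ≤ ⊥ := by
    refine Submodule.span_le.2 ?_
    rintro y ⟨i0, g, rfl⟩
    obtain ⟨h, hh⟩ := factor compl hI hX (f i0) g (hm i0).some iV
      (le_trans (Finset.le_sup (Finset.mem_univ i0)) hNi)
    have : M.map g (x i0) = 0 := by rw [← hh]; simp [hf i0]
    simp [this]
  have : x0 ∈ N' V := hEq ▸ hx0T
  simpa using hbot this
end
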